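/- Let F be a field, let R be an F-algebra (possibly noncommutative), let K₁, K₂, m ≥ 1 be integers, let A_{j,k} (1 ≤ j ≤ K₁, 1 ≤ k ≤ m) and B_{j,k} (1 ≤ j ≤ m, 1 ≤ k ≤ K₂) be elements of R, and let γ ∈ F. Let e_A, e_B be the entangled polynomial encodings over R. Then the coefficient of x^{m−1} in the remainder of e_A(x)·e_B(x) upon division by x^m − γ·1_R equals Σ_{i=1}^{K₁} Σ_{j=1}^{K₂} γ^{(i−1)+(j−1)K₁} · (Σ_{k=1}^{m} A_{i,k}·B_{k,j}). -/

import Mathlib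

open Polynomial Finset

/-- The entangled polynomial (EP) encoding of `A` (blocks `A j k` for `j < K₁`,
`k < m`), with 0-based indices. -/
noncomputable def epA {R : Type*} [Ring R] (K₁ m : ℕ)
    (A : Fin K₁ → Fin m → R) : R[X] :=
  ∑ j : Fin K₁, ∑ k : Fin m, monomial (k.val + j.val * m) (A j k)

/-- The entangled polynomial (EP) encoding of `B` (blocks `B j k` for `j < m`,
`k < K₂`), with 0-based indices. -/
noncomputable def epB {R : Type*} [Ring R] (K₁ K₂ m : ℕ)
    (B : Fin m → Fin K₂ → R) : R[X] :=
  ∑ j : Fin m, ∑ k : Fin K₂, monomial ((m - 1 - j.val) + k.val * (K₁ * m)) (B j k)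

/-- Key step of Theorem 4 (EP-DFT): the coefficient of `x^{m-1}` of the product of
the EP encodings modulo `x^m - γ·1_R` is the Polynomial-code combination
`Σ_{i,j} γ^{(i-1)+(j-1)K₁} C_{i,j}` of the desired blocks. -/
lemma mono_mod {R : Type*} [Ring R] (m : ℕ) (hm : 1 ≤ m) (c : R) (n : ℕ) (a : R) :
    (monomial n a) %ₘ (X ^ m - C c) = monomial (n % m) (c ^ (n / m) * a) := by
  nontriviality R
  have hmonic : (X ^ m - C c).Monic := monic_X_pow_sub_C c (by omega)
  induction n using Nat.strong_induction_on generalizing a with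
  | _ n ih =>
    by_cases h : n < m
    · rw [Nat.mod_eq_of_lt h, Nat.div_eq_of_lt h, pow_zero, one_mul]
      rw [modByMonic_eq_self_iff hmonic]
      calc degree (monomial n a) ≤ n := degree_monomial_le n a
        _ < (m : ℕ) := by exact_mod_cast h
        _ = degree (X ^ m - C c) := (degree_X_pow_sub_C (by omega) c).symm
    · push_neg at h
      have key : (monomial n a : R[X])
          = (X ^ m - C c) * monomial (n - m) a + monomial (n - m) (c * a) := by
        rw [sub_mul, X_pow_eq_monomial, monomial_mul_monomial, C_mul_monomial,
          one_mul]
        rw [show m + (n - m) = n by omega]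
        abel
      have hmod : ((X ^ m - C c) * monomial (n - m) a + monomial (n - m) (c * a))
          %ₘ (X ^ m - C c) = (monomial (n - m) (c * a)) %ₘ (X ^ m - C c) := by
        refine (div_modByMonic_unique
          (monomial (n - m) a + (monomial (n - m) (c * a)) /ₘ (X ^ m - C c)) _ hmonic
          ⟨?_, degree_modByMonic_lt _ hmonic⟩).2
        rw [mul_add, add_left_comm, modByMonic_add_div _ (X ^ m - C c)]
      rw [key, hmod, ih (n - m) (by omega)]
      have h1 : (n - m) % m = n % m := by
        conv_rhs => rw [show n = (n - m) + m by omega]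
        rw [Nat.add_mod_right]
      have h2 : n / m = (n - m) / m + 1 := by
        conv_lhs => rw [show n = (n - m) + m by omega]
        rw [Nat.add_div_right _ (by omega)]
      rw [h1, h2, pow_succ, mul_assoc]

lemma add_mod' {R : Type*} [Ring R] {q : R[X]} (hq : q.Monic) (p₁ p₂ : R[X]) :
    (p₁ + p₂) %ₘ q = p₁ %ₘ q + p₂ %ₘ q := by
  nontriviality R
  exact (div_modByMonic_unique (p₁ /ₘ q + p₂ /ₘ q) _ hq
      ⟨by
        rw [mul_add, add_left_comm, add_assoc, modByMonic_add_div _ q, ← add_assoc,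
          add_comm (q * _), modByMonic_add_div _ q],
        (degree_add_le _ _).trans_lt
          (max_lt (degree_modByMonic_lt _ hq) (degree_modByMonic_lt _ hq))⟩).2

lemma sum_mod' {R : Type*} [Ring R] {q : R[X]} (hq : q.Monic) {ι : Type*}
    (s : Finset ι) (f : ι → R[X]) :
    (∑ i ∈ s, f i) %ₘ q = ∑ i ∈ s, f i %ₘ q := by
  classical
  induction s using Finset.induction_on with
  | empty => simp [zero_modByMonic]
  | insert _ _ h ih => rw [Finset.sum_insert h, Finset.sum_insert h, add_mod' hq, ih]

lemma mod_div_key (m : ℕ) (hm : 1 ≤ m) (k j' t : ℕ) (hk : k < m) (hj' : j' < m) :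
    (((k + (m - 1 - j')) + t * m) % m = m - 1 ↔ k = j')
    ∧ ((m - 1 + t * m) / m = t) := by
  constructor
  · rw [Nat.add_mul_mod_self_right]
    constructor
    · intro h
      rcases lt_or_ge (k + (m - 1 - j')) m with h1 | h1
      · rw [Nat.mod_eq_of_lt h1] at h; omega
      · rw [Nat.mod_eq_sub_mod h1, Nat.mod_eq_of_lt (by omega)] at h
        omega
    · intro h
      subst h
      rw [show k + (m - 1 - k) = m - 1 by omega, Nat.mod_eq_of_lt (by omega)]
  · rw [Nat.add_mul_div_right _ _ (show 0 < m by omega), Nat.div_eq_of_lt (by omega)]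
    omega

theorem stmt_10 {F : Type*} [Field F] {R : Type*} [Ring R] [Algebra F R]
    (K₁ K₂ m : ℕ) (hK₁ : 1 ≤ K₁) (hK₂ : 1 ≤ K₂) (hm : 1 ≤ m)
    (A : Fin K₁ → Fin m → R) (B : Fin m → Fin K₂ → R) (γ : F) :
    ((epA K₁ m A * epB K₁ K₂ m B) %ₘ (X ^ m - C (algebraMap F R γ))).coeff (m - 1)
      = ∑ i : Fin K₁, ∑ j : Fin K₂,
          γ ^ (i.val + j.val * K₁) • (∑ k : Fin m, A i k * B k j) := by
  set c := algebraMap F R γ with hc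
  have hmonic : (X ^ m - C c).Monic := monic_X_pow_sub_C c (by omega)
  have expand : epA K₁ m A * epB K₁ K₂ m B
      = ∑ j' : Fin m, ∑ k' : Fin K₂, ∑ j : Fin K₁, ∑ k : Fin m,
          monomial ((k.val + j.val * m) + ((m - 1 - j'.val) + k'.val * (K₁ * m)))
            (A j k * B j' k') := by
    simp only [epA, epB, Finset.sum_mul, Finset.mul_sum, monomial_mul_monomial]
  rw [expand]
  simp only [sum_mod' hmonic, mono_mod m hm c, finset_sum_coeff, coeff_monomial]
  have hterm : ∀ (j : Fin K₁) (k j' : Fin m) (k' : Fin K₂),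
      (if ((k.val + j.val * m) + ((m - 1 - j'.val) + k'.val * (K₁ * m))) % m = m - 1
        then c ^ (((k.val + j.val * m) + ((m - 1 - j'.val) + k'.val * (K₁ * m))) / m)
          * (A j k * B j' k')
        else 0)
      = if j' = k then c ^ (j.val + k'.val * K₁) * (A j k * B j' k') else 0 := by
    intro j k j' k'
    have hd : (k.val + j.val * m) + ((m - 1 - j'.val) + k'.val * (K₁ * m))
        = (k.val + (m - 1 - j'.val)) + (j.val + k'.val * K₁) * m := by ring
    rw [hd]
    have hiff := (mod_div_key m hm k.val j'.val (j.val + k'.val * K₁) k.isLt j'.isLt).1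
    by_cases h : (k : ℕ) = (j' : ℕ)
    · have hj'k : j' = k := Fin.ext h.symm
      rw [if_pos (hiff.2 h), if_pos hj'k]
      congr 1
      rw [show k.val + (m - 1 - j'.val) = m - 1 by omega]
      exact congrArg (c ^ ·)
        ((mod_div_key m hm k.val j'.val (j.val + k'.val * K₁) k.isLt j'.isLt).2)
    · rw [if_neg (fun hh => h (hiff.1 hh)),
        if_neg (fun hh => h (congrArg Fin.val hh).symm)]
  simp only [hterm, Finset.sum_ite_eq, Finset.mem_univ, if_true]
  rw [Finset.sum_comm]
  rw [Finset.sum_congr rfl fun _ _ => Finset.sum_comm]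
  rw [Finset.sum_comm]
  refine Finset.sum_congr rfl fun i _ => Finset.sum_congr rfl fun j2 _ => ?_
  rw [Algebra.smul_def, map_pow, ← hc, Finset.mul_sum]
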